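/- Positive semidefiniteness preservation of the Riccati step: if Q = [[Q_x, Q_xw],[Q_xwᵀ, Q_w]] is symmetric positive semidefinite, P' is symmetric positive semidefinite, and G = Q_w + BᵀP'B is positive definite, then P = F − H G⁻¹ Hᵀ (where F = Q_x + AᵀP'A and H = Q_xw + AᵀP'B) is symmetric positive semidefinite. -/

import Mathlib

open Matrix

/-- Positive semidefiniteness preservation of the Riccati step: the updated matrix
`P = F − H G⁻¹ Hᵀ` is symmetric positive semidefinite. -/
theorem riccati_step_posSemidef
    (nx nw : ℕ)
    (A : Matrix (Fin nx) (Fin nx) ℝ) (B : Matrix (Fin nx) (Fin nw) ℝ)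
    (Qx : Matrix (Fin nx) (Fin nx) ℝ) (Qxw : Matrix (Fin nx) (Fin nw) ℝ)
    (Qw : Matrix (Fin nw) (Fin nw) ℝ)
    (P' : Matrix (Fin nx) (Fin nx) ℝ)
    (hQ : (Matrix.fromBlocks Qx Qxw Qxwᵀ Qw).PosSemidef)
    (hP' : P'.PosSemidef)
    (hG : (Qw + Bᵀ * P' * B).PosDef) :
    ((Qx + Aᵀ * P' * A)
      - (Qxw + Aᵀ * P' * B) * (Qw + Bᵀ * P' * B)⁻¹ * (Qxw + Aᵀ * P' * B)ᵀ).PosSemidef := by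
  set F := Qx + Aᵀ * P' * A with hF
  set H := Qxw + Aᵀ * P' * B with hH
  set G := Qw + Bᵀ * P' * B with hGdef
  haveI : Invertible G := hG.isUnit.invertible
  have hP's : P'ᵀ = P' := hP'.isHermitian.eq
  have hHc : Hᴴ = Qxwᵀ + Bᵀ * P' * A := by
    simp [hH, conjTranspose_eq_transpose_of_trivial, transpose_add, transpose_mul, hP's,
      Matrix.mul_assoc]
  have key : (fromBlocks F H Hᴴ G).PosSemidef := by
    have heq : fromBlocks F H Hᴴ G
        = fromBlocks Qx Qxw Qxwᵀ Qw + (fromCols A B)ᴴ * P' * fromCols A B := by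
      rw [hHc, conjTranspose_eq_transpose_of_trivial, transpose_fromCols,
        fromRows_mul, fromRows_mul_fromCols, hF, hH, hGdef, fromBlocks_add]
    rw [heq]
    exact hQ.add (hP'.conjTranspose_mul_mul_same _)
  have := (PosDef.fromBlocks₂₂ F H hG).mp key
  simpa [conjTranspose_eq_transpose_of_trivial] using this
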